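/- Suppose that for every stage k < N the investment satisfies the modulation condition −((d_max − d(k))/((1 − d(k))·X_max))·V(k) ≤ I(k) ≤ ((d_max − d(k))/((1 − d(k))·|X_min|))·V(k), and that every realized return satisfies X_min ≤ X(k) ≤ X_max. Then the percentage drawdown satisfies d(k) ≤ d_max for every stage k = 0, 1, …, N. -/

import Mathlib

/-- Running maximum `V_max(k) = max_{0 ≤ i ≤ k} V(i)` of the account value. -/
noncomputable def runMax (V : ℕ → ℝ) (k : ℕ) : ℝ :=
  (Finset.range (k + 1)).sup' Finset.nonempty_range_add_one V

/-- Percentage drawdown `d(k) = (V_max(k) - V(k)) / V_max(k)`. -/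
noncomputable def drawdown (V : ℕ → ℝ) (k : ℕ) : ℝ :=
  (runMax V k - V k) / runMax V k

lemma le_runMax (V : ℕ → ℝ) {k i : ℕ} (h : i ≤ k) : V i ≤ runMax V k :=
  Finset.le_sup' V (Finset.mem_range.mpr (Nat.lt_succ_of_le h))

lemma runMax_succ (V : ℕ → ℝ) (k : ℕ) :
    runMax V (k + 1) = max (V (k + 1)) (runMax V k) := by
  apply le_antisymm
  · apply Finset.sup'_le
    intro i hi
    rcases Nat.lt_succ_iff_lt_or_eq.mp (Finset.mem_range.mp hi) with h | h
    · exact le_trans (le_runMax V (Nat.lt_succ_iff.mp h)) (le_max_right _ _)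
    · rw [h]; exact le_max_left _ _
  · exact max_le (le_runMax V (le_refl _)) (Finset.sup'_le _ _ fun i hi =>
      le_runMax V (Nat.le_succ_of_le (Nat.lt_succ_iff.mp (Finset.mem_range.mp hi))))

theorem drawdown_modulation_sufficiency
    (N : ℕ) (V I X : ℕ → ℝ) (Xmin Xmax dmax : ℝ)
    (hXmin1 : -1 < Xmin) (hXmin0 : Xmin < 0) (hXmax : 0 < Xmax)
    (hdmax0 : 0 < dmax) (hdmax1 : dmax < 1)
    (hV0 : 0 < V 0)
    (hrec : ∀ k, V (k + 1) = V k + I k * X k)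
    (hX : ∀ k, Xmin ≤ X k ∧ X k ≤ Xmax)
    (hI : ∀ k < N,
      -((dmax - drawdown V k) / ((1 - drawdown V k) * Xmax)) * V k ≤ I k ∧
      I k ≤ ((dmax - drawdown V k) / ((1 - drawdown V k) * |Xmin|)) * V k) :
    ∀ k ≤ N, drawdown V k ≤ dmax := by
  intro k
  induction k with
  | zero =>
    intro _
    have h0 : runMax V 0 = V 0 := by
      unfold runMax
      simp
    simp [drawdown, h0]
    exact hdmax0.le
  | succ k ih =>
    intro hk
    have hdk : drawdown V k ≤ dmax := ih (le_trans (Nat.le_succ k) hk)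
    set M := runMax V k with hM
    have hMpos : 0 < M := lt_of_lt_of_le hV0 (le_runMax V (Nat.zero_le k))
    have hVkM : V k ≤ M := le_runMax V (le_refl k)
    set d := drawdown V k with hd
    have hdval : d = (M - V k) / M := rfl
    have hd0 : 0 ≤ d := div_nonneg (by linarith) hMpos.le
    have hd1 : 1 - d > 0 := by linarith
    have hVk : V k = (1 - d) * M := by
      rw [hdval, sub_mul, div_mul_cancel₀ _ hMpos.ne']; ring
    have hVkpos : 0 < V k := by
      rw [hVk]; positivity
    have hXminabs : |Xmin| = -Xmin := abs_of_neg hXmin0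
    have hXminpos : (0:ℝ) < |Xmin| := by rw [hXminabs]; linarith
    obtain ⟨hIl, hIr⟩ := hI k (lt_of_lt_of_le (Nat.lt_succ_self k) hk)
    obtain ⟨hXl, hXr⟩ := hX k
    -- key bound: I k * X k ≥ -((dmax - d)/(1-d)) * V k
    have hkey : -((dmax - d) / (1 - d)) * V k ≤ I k * X k := by
      rcases le_or_gt 0 (I k) with hIpos | hIneg
      · have h1 : I k * Xmin ≤ I k * X k := by
          exact mul_le_mul_of_nonneg_left hXl hIpos
        have h2 : I k * |Xmin| ≤ ((dmax - d) / ((1 - d) * |Xmin|)) * V k * |Xmin| :=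
          mul_le_mul_of_nonneg_right hIr hXminpos.le
        have h3 : ((dmax - d) / ((1 - d) * |Xmin|)) * V k * |Xmin|
            = ((dmax - d) / (1 - d)) * V k := by
          field_simp
        rw [h3] at h2
        have : I k * Xmin = -(I k * |Xmin|) := by rw [hXminabs]; ring
        nlinarith
      · have h1 : I k * Xmax ≤ I k * X k :=
          mul_le_mul_of_nonpos_left hXr hIneg.le
        have h2 : -((dmax - d) / ((1 - d) * Xmax)) * V k * Xmax ≤ I k * Xmax :=
          mul_le_mul_of_nonneg_right hIl hXmax.le
        have h3 : -((dmax - d) / ((1 - d) * Xmax)) * V k * Xmax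
            = -((dmax - d) / (1 - d)) * V k := by
          field_simp
        rw [h3] at h2
        linarith
    -- hence V (k+1) ≥ (1 - dmax) * M
    have hVsucc : (1 - dmax) * M ≤ V (k + 1) := by
      rw [hrec k]
      have : V k - ((dmax - d) / (1 - d)) * V k = (1 - dmax) * M := by
        rw [hVk]
        field_simp
        ring
      linarith
    have hVsuccpos : 0 < V (k + 1) := lt_of_lt_of_le (mul_pos (by linarith) hMpos) hVsucc
    have hM' : runMax V (k + 1) = max (V (k + 1)) M := runMax_succ V k
    rcases le_or_gt M (V (k + 1)) with h | h
    · have : runMax V (k + 1) = V (k + 1) := by rw [hM']; exact max_eq_left h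
      rw [drawdown, this]
      simp
      exact hdmax0.le
    · have hmax : runMax V (k + 1) = M := by rw [hM']; exact max_eq_right h.le
      rw [drawdown, hmax]
      rw [div_le_iff₀ hMpos]
      nlinarith
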